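/- Let ρ = |φ⟩⟨φ| with Schmidt decomposition |φ⟩ = Σ_k λ_k |u_k⟩⊗|v_k⟩ on H_A ⊗ H_B, with {|u_k⟩}, {|v_k⟩} orthonormal, λ_k ≥ 0, Σ λ_k² = 1. Define, for basis vectors p, q of an orthonormal basis of H_A, the operators ρ_{qp} = Tr_A[(|p⟩⟨q| ⊗ I_B) ρ] on H_B. Then Σ_{p,q,m,n} Tr[ρ_{qp} ρ_{nm}] · Tr[ρ_{pq}] · Tr[ρ_{mn}] = Σ_i λ_i⁸. -/

import Mathlib

open Matrix Kronecker BigOperators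

/-- Outer product `|psi><psi|`. -/
noncomputable def outer {n : Type*} [Fintype n] (v : n → ℂ) : Matrix n n ℂ :=
  Matrix.vecMulVec v (star v)

/-- Partial trace over the second (B) factor. -/
noncomputable def ptB {a b : Type*} [Fintype a] [Fintype b]
    (M : Matrix (a × b) (a × b) ℂ) : Matrix a a ℂ :=
  fun i j => ∑ k, M (i, k) (j, k)

/-- Partial trace over the first (A) factor. -/
noncomputable def ptA {a b : Type*} [Fintype a] [Fintype b]
    (M : Matrix (a × b) (a × b) ℂ) : Matrix b b ℂ :=
  fun i j => ∑ k, M (k, i) (k, j)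

/-- `v` is a unit vector. -/
def IsUnitVec {n : Type*} [Fintype n] (v : n → ℂ) : Prop :=
  ∑ i, Complex.normSq (v i) = 1

/-- Entrywise formula for the conditional operators. -/
lemma ptA_entry {dA dB : ℕ} (φ : Fin dA × Fin dB → ℂ) (p q : Fin dA) (i j : Fin dB) :
    ptA ((Matrix.single p q (1 : ℂ) ⊗ₖ (1 : Matrix (Fin dB) (Fin dB) ℂ)) * outer φ) i j
      = φ (q, i) * star (φ (p, j)) := by
  simp [ptA, Matrix.mul_apply, outer, Matrix.vecMulVec_apply, kroneckerMap_apply,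
    Matrix.single, Matrix.one_apply, Fintype.sum_prod_type, ite_and,
    Finset.sum_mul, mul_assoc]

/-- The Gram-type formula for the reduced inner products. -/
lemma gram_formula {dA dB r : ℕ} (l : Fin r → ℝ)
    (u : Fin r → Fin dA → ℂ) (v : Fin r → Fin dB → ℂ)
    (hv : ∀ i j, ∑ b, star (v i b) * v j b = if i = j then (1 : ℂ) else 0)
    (φ : Fin dA × Fin dB → ℂ)
    (hφ : ∀ a b, φ (a, b) = ∑ k, (l k : ℂ) * u k a * v k b)
    (q p : Fin dA) :
    ∑ i, φ (q, i) * star (φ (p, i))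
      = ∑ k, ((l k : ℂ))^2 * u k q * star (u k p) := by
  have key : ∀ k k' : Fin r, ∑ i, v k i * star (v k' i) = if k = k' then (1:ℂ) else 0 := by
    intro k k'
    have := congrArg star (hv k k')
    simpa [star_sum, mul_comm] using this
  simp only [hφ, star_sum, Finset.sum_mul, Finset.mul_sum, star_mul']
  rw [Finset.sum_comm]
  calc ∑ k', ∑ i, ∑ k, (l k : ℂ) * u k q * v k i * (star (l k' : ℂ) * star (u k' p) * star (v k' i))
      = ∑ k', ∑ k, ((l k : ℂ) * u k q * (star (l k' : ℂ)) * star (u k' p)) * (∑ i, v k i * star (v k' i)) := by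
        refine Finset.sum_congr rfl fun k' _ => ?_
        rw [Finset.sum_comm]
        refine Finset.sum_congr rfl fun k _ => ?_
        rw [Finset.mul_sum]
        exact Finset.sum_congr rfl fun i _ => by ring
    _ = ∑ k', ((l k' : ℂ) * u k' q * (star (l k' : ℂ)) * star (u k' p)) := by
        simp only [key, mul_ite, mul_one, mul_zero]
        refine Finset.sum_congr rfl fun k' _ => ?_
        simp only [Finset.sum_ite_eq', Finset.mem_univ, if_true]
    _ = ∑ k, ((l k : ℂ))^2 * u k q * star (u k p) := by
        refine Finset.sum_congr rfl fun k _ => ?_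
        rw [Complex.star_def, Complex.conj_ofReal]
        ring

/-- The quadruple sum is the trace of the fourth power. -/
lemma quad_sum_eq {dA r : ℕ} (l : Fin r → ℝ)
    (u : Fin r → Fin dA → ℂ)
    (hu : ∀ i j, ∑ a, star (u i a) * u j a = if i = j then (1 : ℂ) else 0)
    (T : Matrix (Fin dA) (Fin dA) ℂ)
    (hT : ∀ q p, T q p = ∑ k, ((l k : ℂ))^2 * u k q * star (u k p)) :
    ∑ p : Fin dA, ∑ q : Fin dA, ∑ m : Fin dA, ∑ nn : Fin dA,
      T q m * T nn p * T p q * T m nn = ∑ i, (((l i) ^ 8 : ℝ) : ℂ) := by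
  set U : Matrix (Fin r) (Fin dA) ℂ := Matrix.of u with hU
  set sU : Matrix (Fin r) (Fin dA) ℂ := Matrix.of (fun k a => star (u k a)) with hsU
  set D : Matrix (Fin r) (Fin r) ℂ := Matrix.diagonal (fun k => ((l k : ℂ))^2) with hD
  have h1 : sU * Uᵀ = 1 := by
    ext i j
    simp only [Matrix.mul_apply, Matrix.transpose_apply, hsU, hU, Matrix.of_apply,
      Matrix.one_apply, hu i j]
  have hTm : T = Uᵀ * D * sU := by
    ext q p
    rw [hT]
    simp only [Matrix.mul_apply, Matrix.transpose_apply, hD, hU, hsU, Matrix.of_apply,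
      Matrix.diagonal_apply, mul_ite, mul_zero, Finset.sum_ite_eq', Finset.mem_univ, if_true]
    exact Finset.sum_congr rfl fun k _ => by ring
  have swap3 : ∀ (A : Fin dA → Fin dA → Fin dA → ℂ),
      (∑ q, ∑ m, ∑ nn, A q m nn) = ∑ nn, ∑ m, ∑ q, A q m nn := by
    intro A
    calc (∑ q, ∑ m, ∑ nn, A q m nn) = ∑ q, ∑ nn, ∑ m, A q m nn :=
          Finset.sum_congr rfl fun q _ => Finset.sum_comm
      _ = ∑ nn, ∑ q, ∑ m, A q m nn := Finset.sum_comm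
      _ = ∑ nn, ∑ m, ∑ q, A q m nn := Finset.sum_congr rfl fun nn _ => Finset.sum_comm
  have step1 : (∑ p : Fin dA, ∑ q : Fin dA, ∑ m : Fin dA, ∑ nn : Fin dA,
      T q m * T nn p * T p q * T m nn) = (T * T * T * T).trace := by
    simp only [Matrix.trace, Matrix.diag, Matrix.mul_apply, Finset.sum_mul, Finset.mul_sum]
    refine Finset.sum_congr rfl fun p _ => ?_
    rw [swap3]
    refine Finset.sum_congr rfl fun a _ => Finset.sum_congr rfl fun b _ =>
      Finset.sum_congr rfl fun c _ => by ring
  have step2 : T * T = Uᵀ * (D * D) * sU := by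
    rw [hTm]
    calc Uᵀ * D * sU * (Uᵀ * D * sU) = Uᵀ * (D * (sU * Uᵀ * (D * sU))) := by
          simp only [Matrix.mul_assoc]
      _ = Uᵀ * (D * D) * sU := by rw [h1, Matrix.one_mul]; simp only [Matrix.mul_assoc]
  have step3 : T * T * (T * T) = Uᵀ * (D * D * (D * D)) * sU := by
    rw [step2]
    calc Uᵀ * (D*D) * sU * (Uᵀ * (D*D) * sU) = Uᵀ * (D*D * (sU * Uᵀ * (D*D * sU))) := by
          simp only [Matrix.mul_assoc]
      _ = _ := by rw [h1, Matrix.one_mul]; simp only [Matrix.mul_assoc]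
  rw [step1]
  have hassoc : T * T * T * T = T * T * (T * T) := by simp only [Matrix.mul_assoc]
  rw [hassoc, step3, Matrix.trace_mul_comm (Uᵀ * (D * D * (D * D))) sU,
    ← Matrix.mul_assoc, h1, Matrix.one_mul]
  rw [hD]
  simp only [Matrix.diagonal_mul_diagonal, Matrix.trace_diagonal]
  refine Finset.sum_congr rfl fun k _ => ?_
  push_cast
  ring

/-- An eighth-moment identity in the Schmidt coefficients. -/
theorem stmt_13 (dA dB r : ℕ)
    (l : Fin r → ℝ) (hl : ∀ k, 0 ≤ l k) (hl2 : ∑ k, (l k) ^ 2 = 1)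
    (u : Fin r → Fin dA → ℂ) (v : Fin r → Fin dB → ℂ)
    (hu : ∀ i j, ∑ a, star (u i a) * u j a = if i = j then (1 : ℂ) else 0)
    (hv : ∀ i j, ∑ b, star (v i b) * v j b = if i = j then (1 : ℂ) else 0)
    (φ : Fin dA × Fin dB → ℂ)
    (hφ : ∀ a b, φ (a, b) = ∑ k, (l k : ℂ) * u k a * v k b) :
    ∑ p : Fin dA, ∑ q : Fin dA, ∑ m : Fin dA, ∑ nn : Fin dA,
      (ptA ((Matrix.single p q (1 : ℂ) ⊗ₖ (1 : Matrix (Fin dB) (Fin dB) ℂ)) * outer φ) *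
        ptA ((Matrix.single nn m (1 : ℂ) ⊗ₖ (1 : Matrix (Fin dB) (Fin dB) ℂ)) * outer φ)).trace *
      (ptA ((Matrix.single q p (1 : ℂ) ⊗ₖ (1 : Matrix (Fin dB) (Fin dB) ℂ)) * outer φ)).trace *
      (ptA ((Matrix.single m nn (1 : ℂ) ⊗ₖ (1 : Matrix (Fin dB) (Fin dB) ℂ)) * outer φ)).trace =
      ∑ i, (((l i) ^ 8 : ℝ) : ℂ) := by
  set T : Matrix (Fin dA) (Fin dA) ℂ :=
    Matrix.of (fun q p => ∑ i, φ (q, i) * star (φ (p, i))) with hTdef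
  have tr1 : ∀ p q : Fin dA,
      (ptA ((Matrix.single p q (1 : ℂ) ⊗ₖ (1 : Matrix (Fin dB) (Fin dB) ℂ)) * outer φ)).trace
        = T q p := by
    intro p q
    simp only [Matrix.trace, Matrix.diag, ptA_entry, hTdef, Matrix.of_apply]
  have tr2 : ∀ p q m nn : Fin dA,
      (ptA ((Matrix.single p q (1 : ℂ) ⊗ₖ (1 : Matrix (Fin dB) (Fin dB) ℂ)) * outer φ) *
        ptA ((Matrix.single nn m (1 : ℂ) ⊗ₖ (1 : Matrix (Fin dB) (Fin dB) ℂ)) * outer φ)).trace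
        = T q nn * T m p := by
    intro p q m nn
    simp only [Matrix.trace, Matrix.diag, Matrix.mul_apply, ptA_entry, hTdef, Matrix.of_apply]
    rw [Finset.sum_mul_sum]
    refine Finset.sum_congr rfl fun i _ => Finset.sum_congr rfl fun j _ => by ring
  have hT : ∀ q p, T q p = ∑ k, ((l k : ℂ))^2 * u k q * star (u k p) := by
    intro q p
    simp only [hTdef, Matrix.of_apply]
    exact gram_formula l u v hv φ hφ q p
  calc ∑ p : Fin dA, ∑ q : Fin dA, ∑ m : Fin dA, ∑ nn : Fin dA,
      (ptA ((Matrix.single p q (1 : ℂ) ⊗ₖ (1 : Matrix (Fin dB) (Fin dB) ℂ)) * outer φ) *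
        ptA ((Matrix.single nn m (1 : ℂ) ⊗ₖ (1 : Matrix (Fin dB) (Fin dB) ℂ)) * outer φ)).trace *
      (ptA ((Matrix.single q p (1 : ℂ) ⊗ₖ (1 : Matrix (Fin dB) (Fin dB) ℂ)) * outer φ)).trace *
      (ptA ((Matrix.single m nn (1 : ℂ) ⊗ₖ (1 : Matrix (Fin dB) (Fin dB) ℂ)) * outer φ)).trace
      = ∑ p : Fin dA, ∑ q : Fin dA, ∑ m : Fin dA, ∑ nn : Fin dA,
          T q nn * T m p * T p q * T nn m := by
        refine Finset.sum_congr rfl fun p _ => Finset.sum_congr rfl fun q _ =>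
          Finset.sum_congr rfl fun m _ => Finset.sum_congr rfl fun nn _ => ?_
        rw [tr2 p q m nn, tr1 q p, tr1 m nn]
    _ = ∑ p : Fin dA, ∑ q : Fin dA, ∑ m : Fin dA, ∑ nn : Fin dA,
          T q m * T nn p * T p q * T m nn := by
        refine Finset.sum_congr rfl fun p _ => Finset.sum_congr rfl fun q _ => ?_
        exact Finset.sum_comm
    _ = ∑ i, (((l i) ^ 8 : ℝ) : ℂ) := quad_sum_eq l u hu T hT
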